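/- Let K be a number field, n an integer coprime to 2[Γ':Γ] where Γ is a finitely generated subgroup of K^× and Γ' its division group in K^×, and suppose Gal(K(μ_n)/K) ≅ (ℤ/nℤ)^×. Then Γ ∩ (K(μ_n)^×)^p = Γ^p for every prime p dividing n; in particular Γ ∩ K(μ_n)^{×n} = Γ^n. -/

import Mathlib

open IntermediateField Polynomial

/-- Key descent lemma: if the cyclotomic extension has full Galois group and `p` is an odd
prime dividing `n`, then any element of `K` that is a `p`-th power in `L` is one in `K`. -/
theorem key_descent {K L : Type*} [Field K] [Field L] [Algebra K L]
    (n : ℕ+) [IsCyclotomicExtension {(n : ℕ)} K L]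
    (hgal : Nonempty ((L ≃ₐ[K] L) ≃* (ZMod (n : ℕ))ˣ))
    {p : ℕ} (hp : p.Prime) (hpn : p ∣ (n : ℕ)) (hp2 : p ≠ 2)
    (x : Kˣ) (y : L) (hy : y ^ p = algebraMap K L (x : K)) :
    ∃ z : Kˣ, z ^ p = x := by
  haveI : IsGalois K L := IsCyclotomicExtension.isGalois {(n : ℕ)} K L
  haveI : FiniteDimensional K L := IsCyclotomicExtension.finiteDimensional {(n : ℕ)} K L
  haveI : NeZero ((n : ℕ) : K) := IsCyclotomicExtension.neZero' (n : ℕ) K L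
  haveI : NeZero (n : ℕ) := ⟨n.ne_zero⟩
  haveI : NeZero p := ⟨hp.ne_zero⟩
  obtain ⟨e⟩ := hgal
  -- commutativity of the Galois group
  have hcomm : ∀ σ τ : (L ≃ₐ[K] L), σ * τ = τ * σ := fun σ τ =>
    e.injective (by rw [map_mul, map_mul, mul_comm])
  set ζ := IsCyclotomicExtension.zeta (n : ℕ) K L with hζdef
  have hζ : IsPrimitiveRoot ζ n := IsCyclotomicExtension.zeta_spec (n : ℕ) K L
  have hndiv : (n : ℕ) = (n : ℕ) / p * p := (Nat.div_mul_cancel hpn).symm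
  set ζp := ζ ^ ((n : ℕ) / p) with hζpdef
  have hζp : IsPrimitiveRoot ζp p := hζ.pow n.pos hndiv
  -- surjectivity of autToPow, giving an automorphism inverting roots of unity
  have hsurj : Function.Surjective (hζ.autToPow K) := by
    have hinj := hζ.autToPow_injective K
    have hcard : Fintype.card (L ≃ₐ[K] L) = Fintype.card (ZMod (n : ℕ))ˣ :=
      Fintype.card_congr e.toEquiv
    exact ((Fintype.bijective_iff_injective_and_card _).mpr ⟨hinj, hcard⟩).surjective
  obtain ⟨σ, hσ⟩ := hsurj (-1)
  have hspec := hζ.autToPow_spec K σ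
  rw [hσ] at hspec
  set v := (((-1 : (ZMod (n : ℕ))ˣ) : ZMod (n : ℕ))).val with hv
  have hval : (n : ℕ) ∣ v + 1 := by
    rw [← ZMod.natCast_eq_zero_iff]
    push_cast
    rw [hv, ZMod.natCast_val, ZMod.cast_id]
    simp
  -- σ inverts any p-th root of unity
  have hσ_inv : ∀ c : L, c ^ p = 1 → σ c * c = 1 := by
    intro c hc
    obtain ⟨i, -, rfl⟩ := hζp.eq_pow_of_pow_eq_one hc
    rw [← pow_mul, map_pow, ← hspec, ← pow_mul, ← pow_add, hζ.pow_eq_one_iff_dvd]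
    exact Dvd.dvd.trans hval ⟨(n : ℕ) / p * i, by ring⟩
  -- the fixing subgroup of K(ζp) fixes all p-th roots of unity
  have hτfix : ∀ τ : L ≃ₐ[K] L, τ ∈ K⟮ζp⟯.fixingSubgroup → ∀ c : L, c ^ p = 1 → τ c = c := by
    intro τ hτ c hc
    obtain ⟨i, -, rfl⟩ := hζp.eq_pow_of_pow_eq_one hc
    have h1 : τ ζp = ζp :=
      (K⟮ζp⟯.mem_fixingSubgroup_iff τ).mp hτ ζp (mem_adjoin_simple_self K ζp)
    rw [map_pow, h1]
  have hx0 : algebraMap K L (x : K) ≠ 0 := by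
    simpa using (map_ne_zero (algebraMap K L)).mpr x.ne_zero
  have hy0 : y ≠ 0 := by
    intro h
    rw [h, zero_pow hp.ne_zero] at hy
    exact hx0 hy.symm
  -- every element of the fixing subgroup fixes y
  have hyfix : ∀ τ : L ≃ₐ[K] L, τ ∈ K⟮ζp⟯.fixingSubgroup → τ y = y := by
    intro τ hτ
    have hcp : (τ y * y⁻¹) ^ p = 1 := by
      rw [mul_pow, inv_pow, ← map_pow, hy, AlgEquiv.commutes]
      exact mul_inv_cancel₀ hx0
    have hep : (σ y * y⁻¹) ^ p = 1 := by
      rw [mul_pow, inv_pow, ← map_pow, hy, AlgEquiv.commutes]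
      exact mul_inv_cancel₀ hx0
    set c := τ y * y⁻¹ with hcdef
    -- σ fixes c by commutativity of the Galois group
    have hccomm : σ c = c := by
      have hστ : σ (τ y) = τ (σ y) := by
        have h := congrArg (fun g : L ≃ₐ[K] L => g y) (hcomm σ τ)
        simpa [AlgEquiv.mul_apply] using h
      have hτσy : τ (σ y) = (σ y * y⁻¹) * τ y := by
        have h1 : σ y = σ y * y⁻¹ * y := by field_simp
        calc τ (σ y) = τ (σ y * y⁻¹ * y) := by rw [← h1]
          _ = τ (σ y * y⁻¹) * τ y := map_mul _ _ _
          _ = σ y * y⁻¹ * τ y := by rw [hτfix τ hτ _ hep]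
      have hσy0 : σ y ≠ 0 := fun h => hy0 (by simpa using congrArg σ.symm h)
      rw [hcdef, map_mul, map_inv₀, hστ, hτσy]
      field_simp
    -- but σ also inverts c, so c² = 1, and with c^p = 1, p odd, c = 1
    have hc2 : c * c = 1 := by
      have := hσ_inv c hcp
      rw [hccomm] at this
      exact this
    have hc1 : c = 1 := by
      obtain ⟨k, hk⟩ := hp.odd_of_ne_two hp2
      have : c ^ p = c := by
        rw [hk, pow_succ, pow_mul, pow_two, hc2, one_pow, one_mul]
      rw [hcp] at this
      exact this.symm
    have : τ y * y⁻¹ = 1 := hc1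
    field_simp at this
    exact this
  -- hence y lies in K(ζp)
  have hyF : y ∈ K⟮ζp⟯ := by
    have := IsGalois.fixedField_fixingSubgroup K⟮ζp⟯
    rw [← this]
    exact fun τ => hyfix τ.1 τ.2
  -- now take norms down to K
  set F := K⟮ζp⟯
  haveI : FiniteDimensional K F := inferInstance
  set y₀ : F := ⟨y, hyF⟩ with hy₀def
  have hy₀p : y₀ ^ p = algebraMap K F (x : K) := by
    apply Subtype.ext
    push_cast
    show y ^ p = _
    exact hy
  set d := Module.finrank K F with hd
  have hNp : Algebra.norm K y₀ ^ p = (x : K) ^ d := by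
    rw [← map_pow, hy₀p, Algebra.norm_algebraMap]
  -- d < p
  have hζpint : IsIntegral K ζp := IsIntegral.of_finite K ζp
  have hdle : d ≤ p - 1 := by
    rw [hd, IntermediateField.adjoin.finrank hζpint]
    have hroot : Polynomial.aeval ζp (Polynomial.cyclotomic p K) = 0 := by
      rw [Polynomial.aeval_def, ← Polynomial.eval_map, Polynomial.map_cyclotomic]
      exact hζp.isRoot_cyclotomic hp.pos
    have hdvd : minpoly K ζp ∣ Polynomial.cyclotomic p K := minpoly.dvd K ζp hroot
    have := Polynomial.natDegree_le_of_dvd hdvd (Polynomial.cyclotomic_ne_zero p K)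
    rwa [Polynomial.natDegree_cyclotomic, Nat.totient_prime hp] at this
  have hdpos : 0 < d := Module.finrank_pos
  have hcopd : Nat.Coprime p d := by
    rw [Nat.Prime.coprime_iff_not_dvd hp]
    intro hdvd
    have := Nat.le_of_dvd hdpos hdvd
    omega
  -- Bezout
  have hN0 : Algebra.norm K y₀ ≠ 0 := by
    intro h
    rw [h, zero_pow hp.ne_zero] at hNp
    exact (pow_ne_zero d x.ne_zero) hNp.symm
  set Nu : Kˣ := Units.mk0 (Algebra.norm K y₀) hN0 with hNu
  have hNup : Nu ^ p = x ^ d := by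
    ext
    push_cast
    exact hNp
  have hbez' : (p : ℤ) * Nat.gcdA p d + (d : ℤ) * Nat.gcdB p d = 1 := by
    have h := Nat.gcd_eq_gcd_ab p d
    rw [hcopd] at h
    simpa using h.symm
  have hNuz : Nu ^ (p : ℤ) = x ^ (d : ℤ) := by
    rw [zpow_natCast, zpow_natCast]
    exact hNup
  refine ⟨x ^ Nat.gcdA p d * Nu ^ Nat.gcdB p d, ?_⟩
  have hfin : (x ^ Nat.gcdA p d * Nu ^ Nat.gcdB p d) ^ (p : ℤ) = x := by
    rw [mul_zpow, ← zpow_mul x (Nat.gcdA p d) (p : ℤ), ← zpow_mul Nu (Nat.gcdB p d) (p : ℤ),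
      mul_comm (Nat.gcdB p d) (p : ℤ), zpow_mul Nu (p : ℤ) (Nat.gcdB p d), hNuz,
      ← zpow_mul x (d : ℤ) (Nat.gcdB p d), ← zpow_add, mul_comm (Nat.gcdA p d) (p : ℤ), hbez']
    exact zpow_one x
  rw [← zpow_natCast]
  exact hfin
/-- Let `K` be a number field, `Γ ≤ Kˣ` finitely generated with division group `Γ'`,
and `n` coprime to `2[Γ':Γ]` such that `Gal(K(μ_n)/K) ≅ (ℤ/nℤ)ˣ`. Then
`Γ ∩ (K(μ_n)ˣ)^p = Γ^p` for every prime `p ∣ n`, and `Γ ∩ (K(μ_n)ˣ)^n = Γ^n`. -/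
theorem stmt12 {K L : Type*} [Field K] [NumberField K] [Field L] [Algebra K L]
    (n : ℕ+) [IsCyclotomicExtension {(n : ℕ)} K L]
    (Γ Γ' : Subgroup Kˣ) (hΓ : Γ.FG)
    (hΓ' : ∀ x : Kˣ, x ∈ Γ' ↔ ∃ m : ℕ, 0 < m ∧ x ^ m ∈ Γ)
    (hle : Γ ≤ Γ')
    (hcop : Nat.Coprime (n : ℕ) (2 * (Γ.subgroupOf Γ').index))
    (hgal : Nonempty ((L ≃ₐ[K] L) ≃* (ZMod (n : ℕ))ˣ)) :
    (∀ p : ℕ, p.Prime → p ∣ (n : ℕ) →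
      ∀ x : Kˣ, x ∈ Γ →
        ((∃ y : Lˣ, y ^ p = Units.map (algebraMap K L).toMonoidHom x) ↔
          ∃ γ ∈ Γ, γ ^ p = x)) ∧
    (∀ x : Kˣ, x ∈ Γ →
      ((∃ y : Lˣ, y ^ (n : ℕ) = Units.map (algebraMap K L).toMonoidHom x) ↔
        ∃ γ ∈ Γ, γ ^ (n : ℕ) = x)) := by
  have hn0 : (n : ℕ) ≠ 0 := n.ne_zero
  have hodd2 : Nat.Coprime (n : ℕ) 2 :=
    Nat.Coprime.coprime_dvd_right ⟨(Γ.subgroupOf Γ').index, rfl⟩ hcop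
  -- the prime case, with descent into Γ
  have primeCase : ∀ p : ℕ, p.Prime → p ∣ (n : ℕ) → ∀ x : Kˣ, x ∈ Γ →
      (∃ y : Lˣ, (y : L) ^ p = algebraMap K L (x : K)) → ∃ γ ∈ Γ, γ ^ p = x := by
    rintro p hp hpn x hx ⟨y, hy⟩
    have hp2 : p ≠ 2 := by
      intro h
      have h2 : Nat.Coprime p 2 := Nat.Coprime.coprime_dvd_left hpn hodd2
      rw [h] at h2
      simp [Nat.Coprime] at h2
    obtain ⟨z, hz⟩ := key_descent n hgal hp hpn hp2 x y hy
    have hzΓ' : z ∈ Γ' := (hΓ' z).mpr ⟨p, hp.pos, by rw [hz]; exact hx⟩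
    have hcopPI : Nat.Coprime p ((Γ.subgroupOf Γ').index) := by
      have h1 : Nat.Coprime p (2 * (Γ.subgroupOf Γ').index) :=
        Nat.Coprime.coprime_dvd_left hpn hcop
      exact Nat.Coprime.coprime_dvd_right ⟨2, by ring⟩ h1
    set Z : Γ' := ⟨z, hzΓ'⟩ with hZ
    have hZp : Z ^ p ∈ Γ.subgroupOf Γ' := by
      rw [Subgroup.mem_subgroupOf]
      show (z : Kˣ) ^ p ∈ Γ
      rw [hz]; exact hx
    have hq : ((QuotientGroup.mk' (Γ.subgroupOf Γ')) Z) ^ p = 1 := by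
      rw [← map_pow, QuotientGroup.mk'_apply, QuotientGroup.eq_one_iff]
      exact hZp
    have ho1 : orderOf ((QuotientGroup.mk' (Γ.subgroupOf Γ')) Z) ∣ p :=
      orderOf_dvd_of_pow_eq_one hq
    have ho2 : orderOf ((QuotientGroup.mk' (Γ.subgroupOf Γ')) Z) ∣ (Γ.subgroupOf Γ').index := by
      rw [Subgroup.index]
      exact orderOf_dvd_natCard _
    have hord : orderOf ((QuotientGroup.mk' (Γ.subgroupOf Γ')) Z) = 1 :=
      Nat.eq_one_of_dvd_coprimes hcopPI ho1 ho2
    have hZ1 : (QuotientGroup.mk' (Γ.subgroupOf Γ')) Z = 1 := orderOf_eq_one_iff.mp hord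
    have hZmem : Z ∈ Γ.subgroupOf Γ' := by
      rw [QuotientGroup.mk'_apply, QuotientGroup.eq_one_iff] at hZ1
      exact hZ1
    rw [Subgroup.mem_subgroupOf] at hZmem
    exact ⟨z, hZmem, hz⟩
  set ζ := IsCyclotomicExtension.zeta (n : ℕ) K L with hζdef
  have hζ : IsPrimitiveRoot ζ n := IsCyclotomicExtension.zeta_spec (n : ℕ) K L
  -- the composite case, by induction on the exponent
  have main : ∀ m : ℕ, m ∣ (n : ℕ) → ∀ x : Kˣ, x ∈ Γ →
      (∃ y : Lˣ, (y : L) ^ m = algebraMap K L (x : K)) → ∃ γ ∈ Γ, γ ^ m = x := by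
    intro m
    induction m using Nat.strong_induction_on with
    | _ m ih =>
      rintro hmn x hx ⟨y, hy⟩
      rcases eq_or_ne m 1 with rfl | hm1
      · exact ⟨x, hx, pow_one x⟩
      have hm0 : m ≠ 0 := by
        rintro rfl
        exact hn0 (zero_dvd_iff.mp hmn)
      obtain ⟨p, hp, hpm⟩ := Nat.exists_prime_and_dvd hm1
      haveI : NeZero p := ⟨hp.ne_zero⟩
      set m' := m / p with hm'def
      have hmm : m = m' * p := by
        rw [hm'def, Nat.div_mul_cancel hpm]
      have hpn : p ∣ (n : ℕ) := hpm.trans hmn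
      have hm'm : m' ∣ m := ⟨p, by rw [hmm]⟩
      have h1 : ∃ γ ∈ Γ, γ ^ p = x := by
        refine primeCase p hp hpn x hx ⟨y ^ m', ?_⟩
        push_cast
        rw [← pow_mul, ← hmm]
        exact hy
      obtain ⟨γ₁, hγ₁Γ, hγ₁p⟩ := h1
      have hγ₁0 : algebraMap K L ((γ₁ : Kˣ) : K) ≠ 0 := by
        simpa using (map_ne_zero (algebraMap K L)).mpr (γ₁ : Kˣ).ne_zero
      set c := (y : L) ^ m' * (algebraMap K L ((γ₁ : Kˣ) : K))⁻¹ with hcdef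
      have hcp : c ^ p = 1 := by
        have hγx : ((γ₁ : Kˣ) : K) ^ p = ((x : Kˣ) : K) := by
          exact_mod_cast congrArg Units.val hγ₁p
        rw [hcdef, mul_pow, inv_pow, ← pow_mul, ← hmm, hy, ← map_pow, hγx]
        exact mul_inv_cancel₀ ((map_ne_zero (algebraMap K L)).mpr x.ne_zero)
      have hζp : IsPrimitiveRoot (ζ ^ ((n : ℕ) / p)) p :=
        hζ.pow n.pos (Nat.div_mul_cancel hpn).symm
      obtain ⟨i, -, hi⟩ := hζp.eq_pow_of_pow_eq_one hcp
      have harith : (n : ℕ) / m * i * m' = (n : ℕ) / p * i := by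
        have h2 : (n : ℕ) / m * m' = (n : ℕ) / p := by
          obtain ⟨k, hk⟩ := hmn
          rw [hk, Nat.mul_div_cancel_left k (Nat.pos_of_ne_zero hm0), hmm,
            mul_comm m' p, mul_assoc, Nat.mul_div_cancel_left (m' * k) hp.pos]
          ring
        rw [mul_right_comm, h2]
      set w := ζ ^ ((n : ℕ) / m * i) with hwdef
      have hwm' : w ^ m' = c := by
        rw [hwdef, ← pow_mul, harith, pow_mul]
        exact hi
      have hw0 : w ≠ 0 := pow_ne_zero _ (hζ.ne_zero hn0)
      have hy0 : (y : L) ≠ 0 := Units.ne_zero y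
      have hyp' : ((y * (Units.mk0 w hw0)⁻¹ : Lˣ) : L) ^ m' = algebraMap K L ((γ₁ : Kˣ) : K) := by
        have hcoe : ((y * (Units.mk0 w hw0)⁻¹ : Lˣ) : L) = (y : L) * w⁻¹ := by simp
        rw [hcoe, mul_pow, inv_pow, hwm', hcdef]
        field_simp
      have hm'lt : m' < m := Nat.div_lt_self (Nat.pos_of_ne_zero hm0) hp.one_lt
      obtain ⟨γ₂, hγ₂Γ, hγ₂⟩ := ih m' hm'lt (hm'm.trans hmn) γ₁ hγ₁Γ ⟨_, hyp'⟩
      refine ⟨γ₂, hγ₂Γ, ?_⟩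
      rw [hmm, pow_mul, hγ₂, hγ₁p]
  -- assembly
  have coe_fwd : ∀ (k : ℕ) (x : Kˣ) (y : Lˣ),
      y ^ k = Units.map (algebraMap K L).toMonoidHom x → (y : L) ^ k = algebraMap K L (x : K) := by
    intro k x y h
    have := congrArg Units.val h
    push_cast at this
    exact this
  have coe_bwd : ∀ (k : ℕ) (x : Kˣ) (γ : Kˣ), γ ^ k = x →
      ∃ y : Lˣ, y ^ k = Units.map (algebraMap K L).toMonoidHom x := by
    intro k x γ h
    exact ⟨Units.map (algebraMap K L).toMonoidHom γ, by rw [← map_pow, h]⟩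
  constructor
  · intro p hp hpn x hx
    constructor
    · rintro ⟨y, hyu⟩
      exact primeCase p hp hpn x hx ⟨y, coe_fwd p x y hyu⟩
    · rintro ⟨γ, hγ, hγp⟩
      exact coe_bwd p x γ hγp
  · intro x hx
    constructor
    · rintro ⟨y, hyu⟩
      exact main (n : ℕ) dvd_rfl x hx ⟨y, coe_fwd _ x y hyu⟩
    · rintro ⟨γ, hγ, hγp⟩
      exact coe_bwd _ x γ hγp
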